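/- Let q ≥ 3 be an integer and B ∈ (0,1), and set χ = (1+B)/(B+q−1). Let P be a path with ℓ ≥ 2 vertices and endpoints u, v. Then for arbitrary colours c, c' ∈ [q], it holds that μ_P(P is bichromatic | σ_u = c, σ_v = c') ≤ (4q/B)·χ^{ℓ−2}, where μ_P is the q-state Potts distribution on the path P with parameter B. -/

import Mathlib

open scoped Classical

/-- Number of monochromatic edges of the configuration `σ` in the graph `G`. -/
noncomputable def mEdges {W : Type} [Fintype W] (G : SimpleGraph W) {q : ℕ}
    (σ : W → Fin q) : ℕ :=
  (Finset.univ.filter fun e : Sym2 W => e ∈ G.edgeSet ∧ ∀ x ∈ e, ∀ y ∈ e, σ x = σ y).card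

noncomputable def wt (q n : ℕ) (B : ℝ) (σ : Fin (n+1) → Fin q) : ℝ :=
  ∏ i : Fin n, (if σ i.castSucc = σ i.succ then B else 1)

lemma wt_nonneg {q n : ℕ} {B : ℝ} (hB : 0 ≤ B) (σ : Fin (n+1) → Fin q) :
    0 ≤ wt q n B σ :=
  Finset.prod_nonneg fun i _ => by split <;> [exact hB; norm_num]

lemma wt_le_one {q n : ℕ} {B : ℝ} (hB0 : 0 ≤ B) (hB1 : B ≤ 1) (σ : Fin (n+1) → Fin q) :
    wt q n B σ ≤ 1 :=
  Finset.prod_le_one (fun i _ => by split <;> [exact hB0; norm_num])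
    (fun i _ => by split <;> [exact hB1; norm_num])

lemma wt_cons {q n : ℕ} (B : ℝ) (x : Fin q) (τ : Fin (n+1) → Fin q) :
    wt q (n+1) B (Fin.cons x τ) = (if x = τ 0 then B else 1) * wt q n B τ := by
  rw [wt, Fin.prod_univ_succ, wt]
  have h1 : (Fin.cons x τ : Fin (n+2) → Fin q) (Fin.castSucc 0) = x := by simp
  have h2 : (Fin.cons x τ : Fin (n+2) → Fin q) (Fin.succ 0) = τ 0 := by simp
  rw [h1, h2]
  exact congrArg _ (Finset.prod_congr rfl fun j _ => by
    rw [← Fin.succ_castSucc, Fin.cons_succ, Fin.cons_succ])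

lemma sum_cons_decomp {q n : ℕ} (f : (Fin (n+2) → Fin q) → ℝ) :
    ∑ σ : Fin (n+2) → Fin q, f σ
      = ∑ x : Fin q, ∑ τ : Fin (n+1) → Fin q, f (Fin.cons x τ) := by
  rw [← Equiv.sum_comp (Fin.consEquiv (fun _ : Fin (n+2) => Fin q)) f,
    Fintype.sum_prod_type]
  rfl

lemma sum_fn_fin_one {q : ℕ} (f : (Fin 1 → Fin q) → ℝ) :
    ∑ σ : Fin 1 → Fin q, f σ = ∑ y : Fin q, f (fun _ => y) := by
  rw [← Equiv.sum_comp (Equiv.funUnique (Fin 1) (Fin q)).symm f]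
  rfl

lemma pow_mEdges_path {q n : ℕ} (B : ℝ) (σ : Fin (n+1) → Fin q) :
    B ^ mEdges (SimpleGraph.pathGraph (n+1)) σ = wt q n B σ := by
  rw [wt]
  have hcard : mEdges (SimpleGraph.pathGraph (n+1)) σ
      = (Finset.univ.filter fun i : Fin n => σ i.castSucc = σ i.succ).card := by
    rw [mEdges]
    refine (Finset.card_bij (fun i _ => s(Fin.castSucc i, Fin.succ i)) ?_ ?_ ?_).symm
    · intro i hi
      simp only [Finset.mem_filter, Finset.mem_univ, true_and] at hi ⊢
      constructor
      · rw [SimpleGraph.mem_edgeSet, SimpleGraph.pathGraph_adj]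
        left; simp
      · intro x hx y hy
        rw [Sym2.mem_iff] at hx hy
        rcases hx with hx | hx <;> rcases hy with hy | hy <;> subst hx <;> subst hy <;>
          first | rfl | exact hi | exact hi.symm
    · intro i _ j _ hij
      rcases Sym2.eq_iff.mp hij with ⟨h1, _⟩ | ⟨h1, h2⟩
      · exact Fin.castSucc_injective _ h1
      · have e1 := congrArg Fin.val h1
        have e2 := congrArg Fin.val h2
        simp [Fin.val_succ] at e1 e2
        ext; omega
    · intro e he
      induction e using Sym2.ind with
      | _ a b =>
        simp only [Finset.mem_filter, Finset.mem_univ, true_and] at he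
        obtain ⟨hadj, hmono⟩ := he
        rw [SimpleGraph.mem_edgeSet, SimpleGraph.pathGraph_adj] at hadj
        have hab : σ a = σ b := hmono a (Sym2.mem_mk_left a b) b (Sym2.mem_mk_right a b)
        rcases hadj with h | h
        · have ha : (a : ℕ) < n := by omega
          refine ⟨⟨a, ha⟩, ?_, ?_⟩
          · simp only [Finset.mem_filter, Finset.mem_univ, true_and]
            have h1 : Fin.castSucc ⟨(a : ℕ), ha⟩ = a := by ext; simp
            have h2 : Fin.succ ⟨(a : ℕ), ha⟩ = b := by ext; simp; omega
            rw [h1, h2]; exact hab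
          · rw [Sym2.eq_iff]; left
            constructor <;> ext <;> simp <;> omega
        · have hb : (b : ℕ) < n := by omega
          refine ⟨⟨b, hb⟩, ?_, ?_⟩
          · simp only [Finset.mem_filter, Finset.mem_univ, true_and]
            have h1 : Fin.castSucc ⟨(b : ℕ), hb⟩ = b := by ext; simp
            have h2 : Fin.succ ⟨(b : ℕ), hb⟩ = a := by ext; simp; omega
            rw [h1, h2]; exact hab.symm
          · rw [Sym2.eq_iff]; right
            constructor <;> ext <;> simp <;> omega
  rw [hcard, Finset.prod_ite, Finset.prod_const, Finset.prod_const_one, mul_one]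

noncomputable def Zfix (q n : ℕ) (B : ℝ) (c c' : Fin q) : ℝ :=
  ∑ σ : Fin (n+1) → Fin q, if σ 0 = c ∧ σ (Fin.last n) = c' then wt q n B σ else 0

lemma Zfix_zero {q : ℕ} (B : ℝ) (c c' : Fin q) :
    Zfix q 0 B c c' = if c = c' then 1 else 0 := by
  rw [Zfix, sum_fn_fin_one]
  have hwt : ∀ y : Fin q, wt q 0 B (fun _ => y) = 1 := by
    intro y; rw [wt]; simp
  by_cases h : c = c'
  · subst h
    simp only [hwt, Fin.last, and_self]
    simp [Finset.sum_ite_eq']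
  · rw [Finset.sum_eq_zero, if_neg h]
    intro y _
    rw [if_neg]
    rintro ⟨h1, h2⟩
    exact h (h1.symm.trans h2)

lemma Zfix_succ (q n : ℕ) (B : ℝ) (c c' : Fin q) :
    Zfix q (n+1) B c c' = ∑ y : Fin q, (if c = y then B else 1) * Zfix q n B y c' := by
  have hlast : ∀ (x : Fin q) (τ : Fin (n+1) → Fin q),
      (Fin.cons x τ : Fin (n+2) → Fin q) (Fin.last (n+1)) = τ (Fin.last n) := fun x τ => by
    rw [show Fin.last (n+1) = Fin.succ (Fin.last n) from rfl, Fin.cons_succ]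
  rw [Zfix, sum_cons_decomp]
  have lhs_eq : ∀ x : Fin q, (∑ τ : Fin (n+1) → Fin q,
      if (Fin.cons x τ : Fin (n+2) → Fin q) 0 = c ∧
          (Fin.cons x τ : Fin (n+2) → Fin q) (Fin.last (n+1)) = c'
        then wt q (n+1) B (Fin.cons x τ) else 0)
      = if x = c then (∑ τ : Fin (n+1) → Fin q,
          if τ (Fin.last n) = c' then (if c = τ 0 then B else 1) * wt q n B τ else 0) else 0 := by
    intro x
    by_cases hx : x = c
    · subst hx
      simp only [Fin.cons_zero, hlast, wt_cons, if_pos rfl]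
      apply Finset.sum_congr rfl
      intro τ _
      simp
    · simp only [Fin.cons_zero, hlast, if_neg hx]
      exact Finset.sum_eq_zero fun τ _ => if_neg (fun h => hx h.1)
  rw [Finset.sum_congr rfl (fun x _ => lhs_eq x),
    Finset.sum_ite_eq' Finset.univ c, if_pos (Finset.mem_univ c)]
  have rhs_eq : ∀ y : Fin q, (if c = y then B else 1) * Zfix q n B y c'
      = ∑ τ : Fin (n+1) → Fin q,
          if τ 0 = y then
            (if τ (Fin.last n) = c' then (if c = y then B else 1) * wt q n B τ else 0)
          else 0 := by
    intro y
    rw [Zfix, Finset.mul_sum]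
    apply Finset.sum_congr rfl
    intro τ _
    by_cases h1 : τ 0 = y <;> by_cases h2 : τ (Fin.last n) = c' <;> simp [h1, h2]
  rw [Finset.sum_congr rfl (fun y _ => rhs_eq y), Finset.sum_comm]
  apply Finset.sum_congr rfl
  intro τ _
  rw [Finset.sum_ite_eq Finset.univ (τ 0), if_pos (Finset.mem_univ (τ 0))]

lemma sum_w_eq {q : ℕ} (B : ℝ) (c : Fin q) :
    ∑ y : Fin q, (if c = y then B else 1) = B + q - 1 := by
  have h : ∀ y : Fin q, (if c = y then B else 1) = (if c = y then B - 1 else 0) + 1 := by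
    intro y; split <;> ring
  rw [Finset.sum_congr rfl fun y _ => h y, Finset.sum_add_distrib,
    Finset.sum_ite_eq Finset.univ c, if_pos (Finset.mem_univ c), Finset.sum_const,
    Finset.card_univ, Fintype.card_fin]
  push_cast
  ring

lemma Zfix_ge {q : ℕ} (hq : 3 ≤ q) {B : ℝ} (hB0 : 0 < B) (hB1 : B ≤ 1) :
    ∀ (n : ℕ) (c c' : Fin q), B * (B + q - 1) ^ n ≤ Zfix q (n+1) B c c' := by
  have hq3 : (3 : ℝ) ≤ (q : ℝ) := by exact_mod_cast hq
  have hpos : 0 < B + (q : ℝ) - 1 := by linarith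
  intro n
  induction n with
  | zero =>
    intro c c'
    rw [Zfix_succ]
    have : ∀ y : Fin q, (if c = y then B else 1) * Zfix q 0 B y c'
        = if y = c' then (if c = y then B else 1) else 0 := by
      intro y
      rw [Zfix_zero]
      by_cases h : y = c' <;> simp [h]
    rw [Finset.sum_congr rfl fun y _ => this y,
      Finset.sum_ite_eq' Finset.univ c', if_pos (Finset.mem_univ c')]
    simp only [pow_zero, mul_one]
    split <;> linarith
  | succ m ih =>
    intro c c'
    rw [Zfix_succ]
    have step : ∀ y : Fin q, (if c = y then B else 1) * (B * (B + q - 1) ^ m)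
        ≤ (if c = y then B else 1) * Zfix q (m+1) B y c' := by
      intro y
      apply mul_le_mul_of_nonneg_left (ih y c')
      split <;> norm_num
      exact le_of_lt hB0
    calc B * (B + ↑q - 1) ^ (m+1)
        = (∑ y : Fin q, (if c = y then B else 1)) * (B * (B + q - 1) ^ m) := by
          rw [sum_w_eq]; ring
      _ = ∑ y : Fin q, (if c = y then B else 1) * (B * (B + q - 1) ^ m) := by
          rw [Finset.sum_mul]
      _ ≤ ∑ y : Fin q, (if c = y then B else 1) * Zfix q (m+1) B y c' :=
          Finset.sum_le_sum fun y _ => step y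

noncomputable def Zpair (q n : ℕ) (B : ℝ) (c c₂ : Fin q) : ℝ :=
  ∑ σ : Fin (n+1) → Fin q, if (∀ w, σ w = c ∨ σ w = c₂) then wt q n B σ else 0

lemma Zpair_nonneg {q n : ℕ} {B : ℝ} (hB : 0 ≤ B) (c c₂ : Fin q) :
    0 ≤ Zpair q n B c c₂ :=
  Finset.sum_nonneg fun σ _ => by
    split
    · exact wt_nonneg hB σ
    · exact le_refl 0

lemma ite_pair_split {q : ℕ} (B : ℝ) (c c₂ t x : Fin q) :
    (if (x = c ∨ x = c₂) then (if x = t then B else 1) else 0)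
      = (if x = c then (if c = t then B else 1) else 0)
        + (if x = c₂ ∧ x ≠ c then (if c₂ = t then B else 1) else 0) := by
  split_ifs <;> simp_all

lemma Zpair_le {q : ℕ} {B : ℝ} (hB0 : 0 < B) (hB1 : B ≤ 1) :
    ∀ (n : ℕ) (c c₂ : Fin q), Zpair q n B c c₂ ≤ 2 * (1 + B) ^ n := by
  intro n
  induction n with
  | zero =>
    intro c c₂
    rw [Zpair, sum_fn_fin_one]
    have h : ∀ y : Fin q, (if (∀ w : Fin 1, y = c ∨ y = c₂) then wt q 0 B (fun _ => y) else 0)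
        ≤ (if y = c then 1 else 0) + (if y = c₂ then 1 else 0) := by
      intro y
      have hwt : wt q 0 B (fun _ => y) = 1 := by rw [wt]; simp
      rw [hwt]
      by_cases h1 : y = c <;> by_cases h2 : y = c₂ <;> simp [h1, h2] <;> split <;> norm_num
    calc (∑ y : Fin q, if (∀ w : Fin 1, (fun _ => y) w = c ∨ (fun _ => y) w = c₂)
            then wt q 0 B (fun _ => y) else 0)
        ≤ ∑ y : Fin q, ((if y = c then 1 else 0) + (if y = c₂ then 1 else 0)) :=
          Finset.sum_le_sum fun y _ => h y
      _ = 2 := by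
          rw [Finset.sum_add_distrib, Finset.sum_ite_eq' Finset.univ c,
            Finset.sum_ite_eq' Finset.univ c₂, if_pos (Finset.mem_univ c),
            if_pos (Finset.mem_univ c₂)]
          norm_num
      _ ≤ 2 * (1 + B) ^ 0 := by norm_num
  | succ m ih =>
    intro c c₂
    have hcond : ∀ (x : Fin q) (τ : Fin (m+1) → Fin q),
        (∀ w : Fin (m+2), (Fin.cons x τ : Fin (m+2) → Fin q) w = c ∨
            (Fin.cons x τ : Fin (m+2) → Fin q) w = c₂)
          ↔ ((x = c ∨ x = c₂) ∧ ∀ w, τ w = c ∨ τ w = c₂) := by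
      intro x τ
      rw [Fin.forall_fin_succ]
      simp [Fin.cons_zero, Fin.cons_succ]
    have key : Zpair q (m+1) B c c₂
        = ∑ τ : Fin (m+1) → Fin q, (if (∀ w, τ w = c ∨ τ w = c₂)
            then (∑ x : Fin q, if (x = c ∨ x = c₂) then (if x = τ 0 then B else 1) else 0)
              * wt q m B τ else 0) := by
      rw [Zpair, sum_cons_decomp, Finset.sum_comm]
      apply Finset.sum_congr rfl
      intro τ _
      by_cases hres : ∀ w, τ w = c ∨ τ w = c₂
      · rw [if_pos hres, Finset.sum_mul]
        apply Finset.sum_congr rfl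
        intro x _
        by_cases hx : x = c ∨ x = c₂
        · rw [if_pos ((hcond x τ).mpr ⟨hx, hres⟩), if_pos hx, wt_cons]
        · rw [if_neg, if_neg hx, zero_mul]
          intro hcontra
          exact hx ((hcond x τ).mp hcontra).1
      · rw [if_neg hres]
        apply Finset.sum_eq_zero
        intro x _
        rw [if_neg]
        intro hcontra
        exact hres ((hcond x τ).mp hcontra).2
    have hS : ∀ t : Fin q, (t = c ∨ t = c₂) →
        (∑ x : Fin q, if (x = c ∨ x = c₂) then (if x = t then B else 1) else 0) ≤ 1 + B := by
      intro t ht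
      have hrw : ∀ x : Fin q, (if (x = c ∨ x = c₂) then (if x = t then B else 1) else 0)
          = (if x = c then (if c = t then B else 1) else 0)
            + (if x = c₂ ∧ x ≠ c then (if c₂ = t then B else 1) else 0) :=
        fun x => ite_pair_split B c c₂ t x
      rw [Finset.sum_congr rfl fun x _ => hrw x, Finset.sum_add_distrib,
        Finset.sum_ite_eq' Finset.univ c, if_pos (Finset.mem_univ c)]
      by_cases hcc : c₂ = c
      · have : ∀ x : Fin q, (if x = c₂ ∧ x ≠ c then (if c₂ = t then B else 1) else 0) = 0 := by
          intro x
          rw [if_neg]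
          rintro ⟨h1, h2⟩; exact h2 (h1.trans hcc)
        rw [Finset.sum_congr rfl fun x _ => this x, Finset.sum_const_zero, add_zero]
        rcases ht with ht | ht <;> subst ht <;> split <;> linarith
      · have : ∀ x : Fin q, (if x = c₂ ∧ x ≠ c then (if c₂ = t then B else 1) else 0)
            = (if x = c₂ then (if c₂ = t then B else 1) else 0) := by
          intro x
          by_cases h1 : x = c₂ <;> simp [h1, hcc]
        rw [Finset.sum_congr rfl fun x _ => this x,
          Finset.sum_ite_eq' Finset.univ c₂, if_pos (Finset.mem_univ c₂)]
        rcases ht with ht | ht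
        · rw [if_pos ht.symm, if_neg (fun h : c₂ = t => hcc (h.trans ht))]
          linarith
        · have h1 : ¬ (c = t) := fun h => hcc (h.trans ht).symm
          have h2 : c₂ = t := ht.symm
          rw [if_neg h1, if_pos h2]
    calc Zpair q (m+1) B c c₂
        ≤ ∑ τ : Fin (m+1) → Fin q, (if (∀ w, τ w = c ∨ τ w = c₂)
            then (1 + B) * wt q m B τ else 0) := by
          rw [key]
          apply Finset.sum_le_sum
          intro τ _
          by_cases hres : ∀ w, τ w = c ∨ τ w = c₂
          · rw [if_pos hres, if_pos hres]
            exact mul_le_mul_of_nonneg_right (hS (τ 0) (hres 0)) (wt_nonneg (le_of_lt hB0) τ)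
          · rw [if_neg hres, if_neg hres]
      _ = (1 + B) * Zpair q m B c c₂ := by
          rw [Zpair, Finset.mul_sum]
          apply Finset.sum_congr rfl
          intro τ _
          by_cases hres : ∀ w, τ w = c ∨ τ w = c₂ <;> simp [hres]
      _ ≤ (1 + B) * (2 * (1 + B) ^ m) := by
          apply mul_le_mul_of_nonneg_left (ih c c₂)
          linarith
      _ = 2 * (1 + B) ^ (m + 1) := by ring

lemma num_le {q n : ℕ} {B : ℝ} (hB0 : 0 < B) (hB1 : B ≤ 1) (c c' : Fin q) :
    (∑ σ : Fin (n+1) → Fin q,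
        if (∃ c₁ c₂ : Fin q, ∀ w, σ w = c₁ ∨ σ w = c₂) ∧ (σ 0 = c ∧ σ (Fin.last n) = c')
          then wt q n B σ else 0)
      ≤ q * (2 * (1 + B) ^ n) := by
  have hterm : ∀ σ : Fin (n+1) → Fin q,
      (if (∃ c₁ c₂ : Fin q, ∀ w, σ w = c₁ ∨ σ w = c₂) ∧ (σ 0 = c ∧ σ (Fin.last n) = c')
          then wt q n B σ else 0)
        ≤ ∑ y : Fin q, (if (∀ w, σ w = c ∨ σ w = y) then wt q n B σ else 0) := by
    intro σ
    have hnn : ∀ y : Fin q, 0 ≤ (if (∀ w, σ w = c ∨ σ w = y) then wt q n B σ else 0) := by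
      intro y; split
      · exact wt_nonneg (le_of_lt hB0) σ
      · exact le_refl 0
    by_cases hcond : (∃ c₁ c₂ : Fin q, ∀ w, σ w = c₁ ∨ σ w = c₂) ∧
        (σ 0 = c ∧ σ (Fin.last n) = c')
    · rw [if_pos hcond]
      obtain ⟨⟨c₁, c₂, hall⟩, h0, _⟩ := hcond
      rcases hall 0 with h | h
      · have hall' : ∀ w, σ w = c ∨ σ w = c₂ := by
          intro w
          rcases hall w with hw | hw
          · left; rw [hw, ← h, h0]
          · right; exact hw
        refine le_trans ?_ (Finset.single_le_sum (fun y _ => hnn y) (Finset.mem_univ c₂))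
        rw [if_pos hall']
      · have hall' : ∀ w, σ w = c ∨ σ w = c₁ := by
          intro w
          rcases hall w with hw | hw
          · right; exact hw
          · left; rw [hw, ← h, h0]
        refine le_trans ?_ (Finset.single_le_sum (fun y _ => hnn y) (Finset.mem_univ c₁))
        rw [if_pos hall']
    · rw [if_neg hcond]
      exact Finset.sum_nonneg fun y _ => hnn y
  calc (∑ σ : Fin (n+1) → Fin q,
        if (∃ c₁ c₂ : Fin q, ∀ w, σ w = c₁ ∨ σ w = c₂) ∧ (σ 0 = c ∧ σ (Fin.last n) = c')
          then wt q n B σ else 0)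
      ≤ ∑ σ : Fin (n+1) → Fin q, ∑ y : Fin q,
          (if (∀ w, σ w = c ∨ σ w = y) then wt q n B σ else 0) :=
        Finset.sum_le_sum fun σ _ => hterm σ
    _ = ∑ y : Fin q, Zpair q n B c y := by
        rw [Finset.sum_comm]
        exact Finset.sum_congr rfl fun y _ => rfl
    _ ≤ ∑ _y : Fin q, 2 * (1 + B) ^ n :=
        Finset.sum_le_sum fun y _ => Zpair_le hB0 hB1 n c y
    _ = q * (2 * (1 + B) ^ n) := by
        rw [Finset.sum_const, Finset.card_univ, Fintype.card_fin, nsmul_eq_mul]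

/-- Conditional probability of the event `A` given the event `C`, under the `q`-state
Potts distribution on `G` with parameter `B`. -/
noncomputable def pottsCond {W : Type} [Fintype W] (G : SimpleGraph W) (q : ℕ) (B : ℝ)
    (A C : Set (W → Fin q)) : ℝ :=
  (∑ σ : W → Fin q, if σ ∈ A ∧ σ ∈ C then B ^ mEdges G σ else 0) /
    ∑ σ : W → Fin q, if σ ∈ C then B ^ mEdges G σ else 0

lemma hden_eq (q n : ℕ) (B : ℝ) (c c' : Fin q) :
    (@Finset.sum (Fin (n + 2) → Fin q) ℝ _
      (@Finset.univ _ (@Pi.instFintype (Fin (n + 2)) (fun _ => Fin q)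
        (fun a b => Classical.propDecidable (a = b)) (Fin.fintype (n + 2))
        (fun _ => Fin.fintype q)))
      (fun σ => @ite ℝ (σ ∈ {σ : Fin (n + 2) → Fin q |
          σ ⟨0, by omega⟩ = c ∧ σ ⟨n + 2 - 1, by omega⟩ = c'})
        (Classical.propDecidable _)
        (B ^ mEdges (SimpleGraph.pathGraph (n + 2)) σ) 0))
      = Zfix q (n + 1) B c c' := by
  rw [Zfix]
  refine Finset.sum_congr
    (congrArg (fun i : Fintype (Fin (n + 2) → Fin q) => @Finset.univ _ i)
      (Subsingleton.elim _ _)) fun σ _ => ?_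
  by_cases h : σ 0 = c ∧ σ (Fin.last (n + 1)) = c'
  · exact ((if_pos h).trans (pow_mEdges_path B σ)).trans (if_pos h).symm
  · exact (if_neg h).trans (if_neg h).symm

lemma hnum_eq (q n : ℕ) (B : ℝ) (c c' : Fin q) :
    (@Finset.sum (Fin (n + 2) → Fin q) ℝ _
      (@Finset.univ _ (@Pi.instFintype (Fin (n + 2)) (fun _ => Fin q)
        (fun a b => Classical.propDecidable (a = b)) (Fin.fintype (n + 2))
        (fun _ => Fin.fintype q)))
      (fun σ => @ite ℝ (σ ∈ {σ : Fin (n + 2) → Fin q | ∃ c₁ c₂ : Fin q,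
            ∀ w : Fin (n + 2), σ w = c₁ ∨ σ w = c₂}
          ∧ σ ∈ {σ : Fin (n + 2) → Fin q |
            σ ⟨0, by omega⟩ = c ∧ σ ⟨n + 2 - 1, by omega⟩ = c'})
        (@instDecidableAnd _ _ (Classical.propDecidable _) (Classical.propDecidable _))
        (B ^ mEdges (SimpleGraph.pathGraph (n + 2)) σ) 0))
      = ∑ σ : Fin (n + 2) → Fin q,
          if (∃ c₁ c₂ : Fin q, ∀ w, σ w = c₁ ∨ σ w = c₂) ∧
              (σ 0 = c ∧ σ (Fin.last (n + 1)) = c')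
            then wt q (n + 1) B σ else 0 := by
  refine Finset.sum_congr
    (congrArg (fun i : Fintype (Fin (n + 2) → Fin q) => @Finset.univ _ i)
      (Subsingleton.elim _ _)) fun σ _ => ?_
  by_cases h : (∃ c₁ c₂ : Fin q, ∀ w, σ w = c₁ ∨ σ w = c₂) ∧
      (σ 0 = c ∧ σ (Fin.last (n + 1)) = c')
  · exact ((if_pos h).trans (pow_mEdges_path B σ)).trans (if_pos h).symm
  · exact (if_neg h).trans (if_neg h).symm

lemma aux_main (q : ℕ) (hq : 3 ≤ q) (B : ℝ) (hB0 : 0 < B) (hB1 : B < 1)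
    (n : ℕ) (c c' : Fin q) :
    pottsCond (SimpleGraph.pathGraph (n + 2)) q B
        {σ | ∃ c₁ c₂ : Fin q, ∀ w : Fin (n + 2), σ w = c₁ ∨ σ w = c₂}
        {σ | σ ⟨0, by omega⟩ = c ∧ σ ⟨n + 2 - 1, by omega⟩ = c'} ≤
      4 * q / B * ((1 + B) / (B + (q : ℝ) - 1)) ^ n := by
  have hq3 : (3 : ℝ) ≤ (q : ℝ) := by exact_mod_cast hq
  rw [pottsCond]
  refine le_trans (le_of_eq (?_ : _ =
      (∑ σ : Fin (n + 2) → Fin q,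
          if (∃ c₁ c₂ : Fin q, ∀ w, σ w = c₁ ∨ σ w = c₂) ∧
              (σ 0 = c ∧ σ (Fin.last (n + 1)) = c')
            then wt q (n + 1) B σ else 0) / Zfix q (n + 1) B c c')) ?_
  · exact congrArg₂ (· / ·) (hnum_eq q n B c c') (hden_eq q n B c c')
  have hDb_pos : 0 < B * (B + (q : ℝ) - 1) ^ n := by
    apply mul_pos hB0
    apply pow_pos
    linarith
  have hden_ge : B * (B + (q : ℝ) - 1) ^ n ≤ Zfix q (n + 1) B c c' :=
    Zfix_ge hq hB0 (le_of_lt hB1) n c c'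
  have hnum_le : (∑ σ : Fin (n + 2) → Fin q,
      if (∃ c₁ c₂ : Fin q, ∀ w, σ w = c₁ ∨ σ w = c₂) ∧
          (σ 0 = c ∧ σ (Fin.last (n + 1)) = c')
        then wt q (n + 1) B σ else 0)
      ≤ q * (2 * (1 + B) ^ (n + 1)) :=
    num_le hB0 (le_of_lt hB1) c c'
  have hNb_nonneg : (0 : ℝ) ≤ q * (2 * (1 + B) ^ (n + 1)) := by positivity
  calc (∑ σ : Fin (n + 2) → Fin q,
        if (∃ c₁ c₂ : Fin q, ∀ w, σ w = c₁ ∨ σ w = c₂) ∧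
            (σ 0 = c ∧ σ (Fin.last (n + 1)) = c')
          then wt q (n + 1) B σ else 0) / Zfix q (n + 1) B c c'
      ≤ (q * (2 * (1 + B) ^ (n + 1))) / (B * (B + (q : ℝ) - 1) ^ n) :=
        div_le_div₀ hNb_nonneg hnum_le hDb_pos hden_ge
    _ ≤ (4 * q * (1 + B) ^ n) / (B * (B + (q : ℝ) - 1) ^ n) := by
        apply div_le_div₀ (by positivity) ?_ hDb_pos le_rfl
        have hp : (0:ℝ) ≤ (1 + B) ^ n := by positivity
        have hqn : (0:ℝ) ≤ (q:ℝ) := by positivity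
        rw [pow_succ]
        nlinarith [mul_nonneg hqn hp, hB1.le]
    _ = 4 * q / B * ((1 + B) / (B + (q : ℝ) - 1)) ^ n := by
        rw [div_pow, div_mul_div_comm]

theorem stmt14 (q : ℕ) (hq : 3 ≤ q) (B : ℝ) (hB : B ∈ Set.Ioo (0 : ℝ) 1)
    (ℓ : ℕ) (hℓ : 2 ≤ ℓ) (c c' : Fin q) :
    pottsCond (SimpleGraph.pathGraph ℓ) q B
        {σ | ∃ c₁ c₂ : Fin q, ∀ w : Fin ℓ, σ w = c₁ ∨ σ w = c₂}
        {σ | σ ⟨0, by omega⟩ = c ∧ σ ⟨ℓ - 1, by omega⟩ = c'} ≤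
      4 * q / B * ((1 + B) / (B + (q : ℝ) - 1)) ^ (ℓ - 2) := by
  obtain ⟨hB0, hB1⟩ := hB
  obtain ⟨n, rfl⟩ : ∃ n, ℓ = n + 2 := ⟨ℓ - 2, by omega⟩
  exact aux_main q hq B hB0 hB1 n c c'
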